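/- Let L(P) = E_{X}[E_{Y∼Q(·|X)}[−log P(Y|X)]] denote the expected negative log-likelihood under context distribution over X and response distribution Q(·|X). If for every context X the conditional distributions P_θ(·|X) and P̃_Φ(·|X) are lower-bounded by ε, then |L(P̃_Φ) − L(P_θ)| ≤ E_X[KL(P_θ(·|X) ‖ P̃_Φ(·|X))] + 2·log((1−ε)/ε)·E_X[TV(Q(·|X), P_θ(·|X))]. -/

import Mathlib

/-- Difference of expected negative log-likelihoods between a quantized model
`P̃_Φ` and a floating point model `P_θ`, both lower bounded by `ε`, is bounded
by the expected KL divergence plus a total-variation term: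
`|L(P̃_Φ) - L(P_θ)| ≤ E_X[KL(P_θ(·|X) ‖ P̃_Φ(·|X))]
  + 2 log((1-ε)/ε) E_X[TV(Q(·|X), P_θ(·|X))]`. -/
theorem nll_gap_bound {X Y : Type*} [Fintype X] [Fintype Y]
    (w : X → ℝ) (hw : ∀ x, 0 ≤ w x) (hwsum : ∑ x, w x = 1)
    (Qc Pθ Pt : X → Y → ℝ) (ε : ℝ) (hε : 0 < ε) (hε' : ε < 1/2)
    (hQc : ∀ x y, 0 ≤ Qc x y)
    (hQcsum : ∀ x, ∑ y, Qc x y = 1)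
    (hPθsum : ∀ x, ∑ y, Pθ x y = 1) (hPtsum : ∀ x, ∑ y, Pt x y = 1)
    (hPθ : ∀ x y, ε ≤ Pθ x y) (hPt : ∀ x y, ε ≤ Pt x y) :
    |(∑ x, w x * ∑ y, Qc x y * (-Real.log (Pt x y))) -
      (∑ x, w x * ∑ y, Qc x y * (-Real.log (Pθ x y)))| ≤
      (∑ x, w x * ∑ y, Pθ x y * Real.log (Pθ x y / Pt x y)) +
        2 * Real.log ((1 - ε) / ε) *
          (∑ x, w x * ((1/2) * ∑ y, |Qc x y - Pθ x y|)) := by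
  classical
  have hε1 : ε < 1 := by linarith
  set M := Real.log ((1 - ε) / ε) with hMdef
  have hM : 0 ≤ M := Real.log_nonneg (by rw [le_div_iff₀ hε]; linarith)
  have hMeq : M = Real.log (1 - ε) - Real.log ε :=
    Real.log_div (by linarith) (ne_of_gt hε)
  -- pointwise positivity
  have hPθpos : ∀ x y, 0 < Pθ x y := fun x y => lt_of_lt_of_le hε (hPθ x y)
  have hPtpos : ∀ x y, 0 < Pt x y := fun x y => lt_of_lt_of_le hε (hPt x y)
  -- log difference bound
  have hlog : ∀ x y, |Real.log (Pθ x y) - Real.log (Pt x y)| ≤ M := by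
    intro x y
    by_cases h : ∃ y' : Y, y' ≠ y
    · obtain ⟨y', hy'⟩ := h
      have key : ∀ P : X → Y → ℝ, (∀ x, ∑ y, P x y = 1) → (∀ x y, ε ≤ P x y) →
          P x y ≤ 1 - ε := by
        intro P hsum hlb
        have hsub : ({y, y'} : Finset Y) ⊆ Finset.univ := Finset.subset_univ _
        have h2 : ∑ z ∈ ({y, y'} : Finset Y), P x z ≤ ∑ z, P x z :=
          Finset.sum_le_sum_of_subset_of_nonneg hsub
            (fun i _ _ => le_trans hε.le (hlb x i))
        rw [Finset.sum_pair (Ne.symm hy'), hsum x] at h2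
        have := hlb x y'
        linarith
      have h1 := key Pθ hPθsum hPθ
      have h2 := key Pt hPtsum hPt
      rw [hMeq, abs_le]
      have l1 := Real.log_le_log (hPθpos x y) h1
      have l2 := Real.log_le_log (hPtpos x y) h2
      have l3 := Real.log_le_log hε (hPt x y)
      have l4 := Real.log_le_log hε (hPθ x y)
      constructor <;> linarith
    · push_neg at h
      have e1 : Pθ x y = 1 := by
        rw [← hPθsum x]
        exact (Finset.sum_eq_single_of_mem y (Finset.mem_univ y)
          (fun b _ hb => absurd (h b) hb)).symm
      have e2 : Pt x y = 1 := by
        rw [← hPtsum x]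
        exact (Finset.sum_eq_single_of_mem y (Finset.mem_univ y)
          (fun b _ hb => absurd (h b) hb)).symm
      simp [e1, e2, hM]
  -- per-context quantities
  set D : X → ℝ := fun x => ∑ y, Qc x y * (Real.log (Pθ x y) - Real.log (Pt x y)) with hD
  set K : X → ℝ := fun x => ∑ y, Pθ x y * Real.log (Pθ x y / Pt x y) with hKdef
  have hKrw : ∀ x, K x = ∑ y, Pθ x y * (Real.log (Pθ x y) - Real.log (Pt x y)) := by
    intro x
    refine Finset.sum_congr rfl fun y _ => ?_
    rw [Real.log_div (ne_of_gt (hPθpos x y)) (ne_of_gt (hPtpos x y))]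
  have hKnn : ∀ x, 0 ≤ K x := by
    intro x
    rw [hKrw]
    have : ∑ y, (Pθ x y - Pt x y) ≤
        ∑ y, Pθ x y * (Real.log (Pθ x y) - Real.log (Pt x y)) := by
      refine Finset.sum_le_sum fun y _ => ?_
      have hpos : 0 < Pt x y / Pθ x y := div_pos (hPtpos x y) (hPθpos x y)
      have hlsub := Real.log_le_sub_one_of_pos hpos
      rw [Real.log_div (ne_of_gt (hPtpos x y)) (ne_of_gt (hPθpos x y))] at hlsub
      have hc : Pθ x y * (Pt x y / Pθ x y) = Pt x y :=
        mul_div_cancel₀ _ (ne_of_gt (hPθpos x y))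
      nlinarith [mul_le_mul_of_nonneg_left hlsub (hPθpos x y).le, hc]
    rw [Finset.sum_sub_distrib, hPθsum x, hPtsum x] at this
    linarith
  -- per-context bound
  have hper : ∀ x, |D x| ≤ K x + 2 * M * ((1/2) * ∑ y, |Qc x y - Pθ x y|) := by
    intro x
    have hsplit : D x = K x + ∑ y, (Qc x y - Pθ x y) *
        (Real.log (Pθ x y) - Real.log (Pt x y)) := by
      rw [hKrw, ← Finset.sum_add_distrib]
      refine Finset.sum_congr rfl fun y _ => by ring
    have hR : |∑ y, (Qc x y - Pθ x y) * (Real.log (Pθ x y) - Real.log (Pt x y))| ≤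
        ∑ y, |Qc x y - Pθ x y| * M := by
      refine le_trans (Finset.abs_sum_le_sum_abs _ _) (Finset.sum_le_sum fun y _ => ?_)
      rw [abs_mul]
      exact mul_le_mul_of_nonneg_left (hlog x y) (abs_nonneg _)
    have : |D x| ≤ K x + ∑ y, |Qc x y - Pθ x y| * M := by
      rw [hsplit]
      calc |K x + _| ≤ |K x| + _ := abs_add_le _ _
        _ ≤ K x + ∑ y, |Qc x y - Pθ x y| * M := by
            rw [abs_of_nonneg (hKnn x)]; exact add_le_add_right hR _
    calc |D x| ≤ K x + ∑ y, |Qc x y - Pθ x y| * M := this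
      _ = K x + 2 * M * ((1/2) * ∑ y, |Qc x y - Pθ x y|) := by
          rw [← Finset.sum_mul]; ring
  -- assemble
  have hrw : (∑ x, w x * ∑ y, Qc x y * (-Real.log (Pt x y))) -
      (∑ x, w x * ∑ y, Qc x y * (-Real.log (Pθ x y))) = ∑ x, w x * D x := by
    rw [← Finset.sum_sub_distrib]
    refine Finset.sum_congr rfl fun x _ => ?_
    rw [← mul_sub, ← Finset.sum_sub_distrib]
    congr 1
    refine Finset.sum_congr rfl fun y _ => by ring
  rw [hrw]
  calc |∑ x, w x * D x| ≤ ∑ x, |w x * D x| := Finset.abs_sum_le_sum_abs _ _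
    _ = ∑ x, w x * |D x| := by
        refine Finset.sum_congr rfl fun x _ => ?_
        rw [abs_mul, abs_of_nonneg (hw x)]
    _ ≤ ∑ x, w x * (K x + 2 * M * ((1/2) * ∑ y, |Qc x y - Pθ x y|)) :=
        Finset.sum_le_sum fun x _ => mul_le_mul_of_nonneg_left (hper x) (hw x)
    _ = (∑ x, w x * K x) + 2 * M * (∑ x, w x * ((1/2) * ∑ y, |Qc x y - Pθ x y|)) := by
        rw [Finset.mul_sum, ← Finset.sum_add_distrib]
        refine Finset.sum_congr rfl fun x _ => by ring
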